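/- A matrix C ∈ Matrix (Fin n) (Fin n) ℂ is strictly accretive, i.e., the Hermitian matrix C + Cᴴ is positive definite, if and only if C admits a sectoral decomposition C = Tᴴ * D * T in which T is invertible, D is diagonal with every diagonal entry of modulus 1, and every diagonal entry of D has strictly positive real part (equivalently, all phases of C lie in (−π/2, π/2)). -/

import Mathlib

open Matrix
open scoped ComplexOrder
open scoped MatrixOrder

lemma aux_posdef_conj {n : ℕ} {M T : Matrix (Fin n) (Fin n) ℂ} (hM : M.PosDef)
    (hT : IsUnit T) : (T.conjTranspose * M * T).PosDef := by
  rw [posDef_iff_dotProduct_mulVec]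
  constructor
  · have := hM.1.eq
    unfold Matrix.IsHermitian
    simp [conjTranspose_mul, mul_assoc, this]
  · intro x hx
    have hTx : T *ᵥ x ≠ 0 := by
      intro h
      apply hx
      have := Matrix.mulVec_injective_iff_isUnit.mpr hT
      exact this (by simpa using h)
    have : star x ⬝ᵥ ((T.conjTranspose * M * T) *ᵥ x)
        = star (T *ᵥ x) ⬝ᵥ (M *ᵥ (T *ᵥ x)) := by
      rw [← mulVec_mulVec, ← mulVec_mulVec, dotProduct_mulVec, star_mulVec]
    rw [this]
    exact hM.dotProduct_mulVec_pos hTx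

lemma aux_normalize {n : ℕ} (C P : Matrix (Fin n) (Fin n) ℂ) (m : Fin n → ℂ)
    (hP : IsUnit P) (hm : ∀ i, 0 < (m i).re)
    (hC : C = P.conjTranspose * diagonal m * P) :
    ∃ T D : Matrix (Fin n) (Fin n) ℂ, IsUnit T ∧ D.IsDiag ∧
      (∀ k, ‖D k k‖ = 1) ∧ (∀ k, 0 < (D k k).re) ∧
      C = T.conjTranspose * D * T := by
  have hm0 : ∀ i, m i ≠ 0 := fun i h => by simpa [h] using hm i
  have habs : ∀ i, 0 < ‖m i‖ := fun i => by
    simpa using (norm_pos_iff.mpr (hm0 i))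
  set f : Fin n → ℂ := fun i => (Real.sqrt (‖m i‖) : ℂ) with hf
  have hfne : ∀ i, f i ≠ 0 := fun i => by
    simp only [hf, ne_eq, Complex.ofReal_eq_zero]
    exact (Real.sqrt_pos.mpr (habs i)).ne'
  have hdiag : diagonal f * diagonal (fun i => m i / (‖m i‖ : ℂ)) * diagonal f
      = diagonal m := by
    rw [diagonal_mul_diagonal, diagonal_mul_diagonal]
    have harg : (fun i => f i * (m i / (‖m i‖ : ℂ)) * f i) = m := by
      funext i
      have h1 : (f i) * (f i) = ((‖m i‖ : ℝ) : ℂ) := by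
        rw [hf, ← Complex.ofReal_mul, Real.mul_self_sqrt (habs i).le]
      have h2 : ((‖m i‖ : ℝ) : ℂ) ≠ 0 := by
        simpa using (habs i).ne'
      calc f i * (m i / (‖m i‖ : ℂ)) * f i
          = (f i * f i) * m i / (‖m i‖ : ℂ) := by ring
        _ = m i := by rw [h1]; field_simp
    rw [harg]
  refine ⟨diagonal f * P, diagonal (fun i => m i / (‖m i‖ : ℂ)),
    ?_, isDiag_diagonal _, ?_, ?_, ?_⟩
  · refine (Matrix.isUnit_diagonal.mpr ?_).mul hP
    exact IsUnit.of_mul_eq_one (a := f) (fun i => (f i)⁻¹)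
      (funext fun i => by simp [Pi.mul_apply, mul_inv_cancel₀ (hfne i)])
  · intro k
    simp [map_div₀, (habs k).ne']
  · intro k
    simp only [diagonal_apply_eq, Complex.div_ofReal_re]
    exact div_pos (hm k) (habs k)
  · rw [hC, conjTranspose_mul, diagonal_conjTranspose]
    have hstar : star f = f := by funext i; simp [hf]
    rw [hstar, ← hdiag]
    simp only [mul_assoc]

/-- A matrix is strictly accretive (i.e. `C + Cᴴ` is positive definite) iff it admits a
sectoral decomposition whose diagonal unitary factor has diagonal entries with strictly
positive real part. -/
theorem strictly_accretive_iff_sectoral_decomposition {n : ℕ}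
    (C : Matrix (Fin n) (Fin n) ℂ) :
    (C + C.conjTranspose).PosDef ↔
      ∃ T D : Matrix (Fin n) (Fin n) ℂ, IsUnit T ∧ D.IsDiag ∧
        (∀ k, ‖D k k‖ = 1) ∧ (∀ k, 0 < (D k k).re) ∧
        C = T.conjTranspose * D * T := by
  constructor
  · intro h
    have hps := h.posSemidef
    set B := CFC.sqrt (C + C.conjTranspose) with hBdef
    have hBB : B * B = C + C.conjTranspose := CFC.sqrt_mul_sqrt_self _ hps.nonneg
    have hBherm : B.IsHermitian := (CFC.sqrt_nonneg _).posSemidef.isHermitian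
    have hBunit : IsUnit B := by
      rw [Matrix.isUnit_iff_isUnit_det, isUnit_iff_ne_zero]
      intro hd
      have := congrArg Matrix.det hBB
      rw [Matrix.det_mul, hd, mul_zero] at this
      exact h.det_pos.ne' this.symm
    have hdet : IsUnit B.det := Matrix.isUnit_iff_isUnit_det _ |>.mp hBunit
    have hBinv : B * B⁻¹ = 1 := Matrix.mul_nonsing_inv _ hdet
    have hinvB : B⁻¹ * B = 1 := Matrix.nonsing_inv_mul _ hdet
    set S := C - C.conjTranspose with hSdef
    set K := B⁻¹ * S * B⁻¹ with hKdef
    have hBKB : B * K * B = S := by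
      rw [hKdef]
      rw [← mul_assoc, ← mul_assoc, hBinv, one_mul, mul_assoc, hinvB, mul_one]
    have hBinvH : (B⁻¹).conjTranspose = B⁻¹ := by
      rw [conjTranspose_nonsing_inv, hBherm.eq]
    have hSk : S.conjTranspose = -S := by
      rw [hSdef, conjTranspose_sub, conjTranspose_conjTranspose]
      abel
    have hKskew : K.conjTranspose = -K := by
      rw [hKdef, conjTranspose_mul, conjTranspose_mul, hBinvH, hSk]
      simp [mul_assoc]
    set A := (-Complex.I) • K with hAdef
    have hA : A.IsHermitian := by
      unfold Matrix.IsHermitian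
      rw [hAdef, conjTranspose_smul, hKskew]
      simp [Complex.star_def]
    have hKA : K = Complex.I • A := by
      rw [hAdef, smul_smul]
      simp [Complex.I_mul_I]
    set U : Matrix (Fin n) (Fin n) ℂ := (hA.eigenvectorUnitary : Matrix (Fin n) (Fin n) ℂ)
      with hUdef
    have hspec : A = U * diagonal ((↑) ∘ hA.eigenvalues) * star U := hA.spectral_theorem
    have hUs : U * star U = 1 := (Matrix.mem_unitaryGroup_iff).mp hA.eigenvectorUnitary.2
    have hsU : star U * U = 1 := (Matrix.mem_unitaryGroup_iff').mp hA.eigenvectorUnitary.2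
    have hsUunit : IsUnit (star U) := ⟨⟨star U, U, hsU, hUs⟩, rfl⟩
    set z : Fin n → ℂ := fun i => 1 + Complex.I * hA.eigenvalues i with hzdef
    have hz : diagonal z
        = diagonal (fun _ => (1:ℂ)) + Complex.I • diagonal ((↑) ∘ hA.eigenvalues) := by
      rw [← diagonal_smul, ← diagonal_add]
      congr 1
    have honeK : 1 + K = U * diagonal z * star U := by
      rw [hKA, hspec, hz, mul_add, add_mul, diagonal_one, mul_one, hUs,
        Matrix.mul_smul, Matrix.smul_mul]
    have h2C : C + C = B * (1 + K) * B := by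
      rw [mul_add, mul_one, add_mul, hBB, hBKB, hSdef]
      abel
    have hPH : (star U * B).conjTranspose = B * U := by
      rw [conjTranspose_mul, hBherm.eq]
      congr 1
      simp [star_eq_conjTranspose]
    have hmid : B * U * (diagonal z * (star U * B)) = C + C := by
      rw [h2C, honeK]
      simp only [mul_assoc]
    have hhalf : diagonal (fun i => z i / 2) = (2:ℂ)⁻¹ • diagonal z := by
      ext i j
      by_cases hij : i = j <;> simp [diagonal_apply, hij, div_eq_inv_mul]
    have hkey : C = (star U * B).conjTranspose * diagonal (fun i => z i / 2) * (star U * B) := by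
      rw [hPH, hhalf, Matrix.mul_smul, Matrix.smul_mul, mul_assoc, hmid]
      rw [← two_smul ℂ C, smul_smul]
      norm_num
    have hmre : ∀ i, 0 < ((fun i => z i / 2) i).re := by
      intro i
      have h1 : (z i).re = 1 := by
        simp [hzdef]
      have h2 : z i / 2 = z i / ((2:ℝ):ℂ) := by norm_num
      show 0 < (z i / 2).re
      rw [h2, Complex.div_ofReal_re, h1]
      norm_num
    exact aux_normalize C (star U * B) (fun i => z i / 2) (hsUunit.mul hBunit) hmre hkey
  · intro h
    obtain ⟨T, D, hT, hD, habs, hre, hC⟩ := h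
    have hDdiag : diagonal (fun k => D k k) = D := hD.diagonal_diag
    have hsum : C + C.conjTranspose = T.conjTranspose * (D + D.conjTranspose) * T := by
      rw [hC]
      simp only [conjTranspose_mul, conjTranspose_conjTranspose, mul_add, add_mul, mul_assoc]
    rw [hsum]
    have hpos : (D + D.conjTranspose).PosDef := by
      rw [← hDdiag, diagonal_conjTranspose, diagonal_add]
      refine Matrix.PosDef.diagonal fun i => ?_
      show (0:ℂ) < D i i + (star (fun k => D k k)) i
      rw [Pi.star_apply, Complex.star_def, Complex.add_conj, Complex.zero_lt_real]
      linarith [hre i]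
    exact aux_posdef_conj hpos hT
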